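/- Let c_s ≤ 0, let U ⊆ ℝ^d be open, let u₁, u₀, u₋₁ : U → ℝ be nonnegative functions differentiable at a point x ∈ U, and let |u| = (u₁² + u₀² + u₋₁²)^{1/2}. If |u|(x) > 0 then |u| is differentiable at x and ( Σ_j ‖∇u_j(x)‖² + c_s(2u₀(x)²(u₁(x) + u₋₁(x))² + (u₁(x)² − u₋₁(x)²)²) ) − ( ‖∇|u|(x)‖² + c_s|u(x)|⁴ ) = ( Σ_j ‖∇u_j(x)‖² − ‖∇|u|(x)‖² ) − c_s (u₀(x)² − 2u₁(x)u₋₁(x))² ≥ 0; in particular the single-mode energy density ‖∇|u|(x)‖² + c_s|u(x)|⁴ is no larger than the energy density Σ_j ‖∇u_j(x)‖² + c_s(2u₀²(u₁ + u₋₁)² + (u₁² − u₋₁²)²) evaluated at x. -/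

import Mathlib

set_option maxHeartbeats 1000000

/-- Pointwise energy comparison for ferromagnetic spin-1 condensates (`c_s ≤ 0`).
For nonnegative `u₁, u₀, u₋₁` differentiable at `x ∈ U` with `|u|(x) > 0`,
`|u| = (u₁² + u₀² + u₋₁²)^{1/2}` is differentiable at `x` and
`(Σ‖∇uⱼ‖² + c_s(2u₀²(u₁+u₋₁)² + (u₁²−u₋₁²)²)) − (‖∇|u|‖² + c_s|u|⁴)
 = (Σ‖∇uⱼ‖² − ‖∇|u|‖²) − c_s(u₀² − 2u₁u₋₁)² ≥ 0`. -/
theorem ferro_pointwise_energy_comparison {d : ℕ} (cs : ℝ) (hcs : cs ≤ 0)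
    (U : Set (EuclideanSpace ℝ (Fin d))) (hU : IsOpen U)
    (u1 u0 um1 : EuclideanSpace ℝ (Fin d) → ℝ)
    (h1 : ∀ y ∈ U, 0 ≤ u1 y) (h0 : ∀ y ∈ U, 0 ≤ u0 y) (hm1 : ∀ y ∈ U, 0 ≤ um1 y)
    (x : EuclideanSpace ℝ (Fin d)) (hx : x ∈ U)
    (hd1 : DifferentiableAt ℝ u1 x) (hd0 : DifferentiableAt ℝ u0 x)
    (hdm1 : DifferentiableAt ℝ um1 x)
    (n : EuclideanSpace ℝ (Fin d) → ℝ)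
    (hn : n = fun y => Real.sqrt ((u1 y) ^ 2 + (u0 y) ^ 2 + (um1 y) ^ 2))
    (hnx : 0 < n x) :
    DifferentiableAt ℝ n x ∧
    (‖gradient u1 x‖ ^ 2 + ‖gradient u0 x‖ ^ 2 + ‖gradient um1 x‖ ^ 2
        + cs * (2 * (u0 x) ^ 2 * (u1 x + um1 x) ^ 2 + ((u1 x) ^ 2 - (um1 x) ^ 2) ^ 2))
      - (‖gradient n x‖ ^ 2 + cs * ((u1 x) ^ 2 + (u0 x) ^ 2 + (um1 x) ^ 2) ^ 2)
      = (‖gradient u1 x‖ ^ 2 + ‖gradient u0 x‖ ^ 2 + ‖gradient um1 x‖ ^ 2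
          - ‖gradient n x‖ ^ 2)
        - cs * ((u0 x) ^ 2 - 2 * u1 x * um1 x) ^ 2 ∧
    0 ≤ (‖gradient u1 x‖ ^ 2 + ‖gradient u0 x‖ ^ 2 + ‖gradient um1 x‖ ^ 2
          - ‖gradient n x‖ ^ 2)
        - cs * ((u0 x) ^ 2 - 2 * u1 x * um1 x) ^ 2 ∧
    ‖gradient n x‖ ^ 2 + cs * ((u1 x) ^ 2 + (u0 x) ^ 2 + (um1 x) ^ 2) ^ 2
      ≤ ‖gradient u1 x‖ ^ 2 + ‖gradient u0 x‖ ^ 2 + ‖gradient um1 x‖ ^ 2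
        + cs * (2 * (u0 x) ^ 2 * (u1 x + um1 x) ^ 2 + ((u1 x) ^ 2 - (um1 x) ^ 2) ^ 2) := by
  set a := u1 x with ha
  set b := u0 x with hb
  set c := um1 x with hc
  set g1 := gradient u1 x with hg1
  set g0 := gradient u0 x with hg0
  set gm1 := gradient um1 x with hgm1
  -- the squared-sum function
  set s : EuclideanSpace ℝ (Fin d) → ℝ := fun y => (u1 y) ^ 2 + (u0 y) ^ 2 + (um1 y) ^ 2
    with hs
  have hsx : s x = (n x) ^ 2 := by
    rw [hn]
    rw [Real.sq_sqrt (by positivity)]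
  have hsx_pos : 0 < s x := by rw [hsx]; positivity
  have hsx_ne : s x ≠ 0 := ne_of_gt hsx_pos
  -- fderiv of s
  have hF1 : HasFDerivAt u1 (InnerProductSpace.toDual ℝ _ g1) x := hd1.hasGradientAt
  have hF0 : HasFDerivAt u0 (InnerProductSpace.toDual ℝ _ g0) x := hd0.hasGradientAt
  have hFm1 : HasFDerivAt um1 (InnerProductSpace.toDual ℝ _ gm1) x := hdm1.hasGradientAt
  have hFs : HasFDerivAt s
      ((2 * a) • InnerProductSpace.toDual ℝ _ g1 + (2 * b) • InnerProductSpace.toDual ℝ _ g0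
        + (2 * c) • InnerProductSpace.toDual ℝ _ gm1) x := by
    have e1 := hF1.mul hF1
    have e0 := hF0.mul hF0
    have em1 := hFm1.mul hFm1
    have h := (e1.add e0).add em1
    have hseq : s = fun y => u1 y * u1 y + u0 y * u0 y + um1 y * um1 y := by
      funext y; simp [hs]; ring
    rw [hseq]
    refine h.congr_fderiv ?_
    simp only [← ha, ← hb, ← hc]
    module
  -- fderiv of n
  have hFn : HasFDerivAt n ((1 / (2 * Real.sqrt (s x))) •
      ((2 * a) • InnerProductSpace.toDual ℝ _ g1 + (2 * b) • InnerProductSpace.toDual ℝ _ g0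
        + (2 * c) • InnerProductSpace.toDual ℝ _ gm1)) x := by
    rw [hn]
    exact hFs.sqrt hsx_ne
  have hsqrt : Real.sqrt (s x) = n x := by rw [hn]
  -- gradient of n
  set g : EuclideanSpace ℝ (Fin d) :=
    (n x)⁻¹ • (a • g1 + b • g0 + c • gm1) with hg
  have hdual : (InnerProductSpace.toDual ℝ (EuclideanSpace ℝ (Fin d))) g
      = (1 / (2 * Real.sqrt (s x))) •
      ((2 * a) • InnerProductSpace.toDual ℝ _ g1 + (2 * b) • InnerProductSpace.toDual ℝ _ g0
        + (2 * c) • InnerProductSpace.toDual ℝ _ gm1) := by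
    rw [hsqrt, hg]
    simp only [map_smul, map_add, smul_add, smul_smul]
    have hne : n x ≠ 0 := ne_of_gt hnx
    congr 1 <;> field_simp <;> ring
  have hGn : HasGradientAt n g x := by
    rw [hasGradientAt_iff_hasFDerivAt, hdual]
    exact hFn
  have hdiff : DifferentiableAt ℝ n x := hGn.differentiableAt
  have hgn : gradient n x = g := hGn.gradient
  -- norm bound
  have ha0 : 0 ≤ a := h1 x hx
  have hb0 : 0 ≤ b := h0 x hx
  have hc0 : 0 ≤ c := hm1 x hx
  have hnormg : ‖g‖ ≤ (n x)⁻¹ * (a * ‖g1‖ + b * ‖g0‖ + c * ‖gm1‖) := by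
    rw [hg]
    rw [norm_smul]
    have : ‖a • g1 + b • g0 + c • gm1‖ ≤ a * ‖g1‖ + b * ‖g0‖ + c * ‖gm1‖ := by
      calc ‖a • g1 + b • g0 + c • gm1‖ ≤ ‖a • g1 + b • g0‖ + ‖c • gm1‖ := norm_add_le _ _
        _ ≤ ‖a • g1‖ + ‖b • g0‖ + ‖c • gm1‖ := by
            gcongr; exact norm_add_le _ _
        _ = a * ‖g1‖ + b * ‖g0‖ + c * ‖gm1‖ := by
            simp [norm_smul, abs_of_nonneg, ha0, hb0, hc0]
    calc ‖(n x)⁻¹‖ * ‖a • g1 + b • g0 + c • gm1‖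
        ≤ ‖(n x)⁻¹‖ * (a * ‖g1‖ + b * ‖g0‖ + c * ‖gm1‖) := by gcongr
      _ = (n x)⁻¹ * (a * ‖g1‖ + b * ‖g0‖ + c * ‖gm1‖) := by
          rw [Real.norm_eq_abs, abs_of_pos (inv_pos.mpr hnx)]
  have habc : a ^ 2 + b ^ 2 + c ^ 2 = (n x) ^ 2 := hsx
  have hkey : ‖gradient n x‖ ^ 2 ≤ ‖g1‖ ^ 2 + ‖g0‖ ^ 2 + ‖gm1‖ ^ 2 := by
    rw [hgn]
    have h2 : ‖g‖ ^ 2 ≤ ((n x)⁻¹ * (a * ‖g1‖ + b * ‖g0‖ + c * ‖gm1‖)) ^ 2 := by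
      exact pow_le_pow_left₀ (norm_nonneg g) hnormg 2
    have hCS : (a * ‖g1‖ + b * ‖g0‖ + c * ‖gm1‖) ^ 2
        ≤ (a ^ 2 + b ^ 2 + c ^ 2) * (‖g1‖ ^ 2 + ‖g0‖ ^ 2 + ‖gm1‖ ^ 2) := by
      nlinarith [sq_nonneg (a * ‖g0‖ - b * ‖g1‖), sq_nonneg (a * ‖gm1‖ - c * ‖g1‖),
        sq_nonneg (b * ‖gm1‖ - c * ‖g0‖)]
    have hn2 : (0:ℝ) < (n x) ^ 2 := by positivity
    calc ‖g‖ ^ 2 ≤ ((n x)⁻¹ * (a * ‖g1‖ + b * ‖g0‖ + c * ‖gm1‖)) ^ 2 := h2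
      _ = ((n x) ^ 2)⁻¹ * (a * ‖g1‖ + b * ‖g0‖ + c * ‖gm1‖) ^ 2 := by
          rw [mul_pow]; ring_nf
      _ ≤ ((n x) ^ 2)⁻¹ * ((a ^ 2 + b ^ 2 + c ^ 2) * (‖g1‖ ^ 2 + ‖g0‖ ^ 2 + ‖gm1‖ ^ 2)) := by
          gcongr
      _ = ‖g1‖ ^ 2 + ‖g0‖ ^ 2 + ‖gm1‖ ^ 2 := by
          rw [habc]; field_simp
  refine ⟨hdiff, by ring, ?_, ?_⟩
  · nlinarith [sq_nonneg (b ^ 2 - 2 * a * c), mul_nonneg (neg_nonneg.mpr hcs) (sq_nonneg (b ^ 2 - 2 * a * c))]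
  · nlinarith [sq_nonneg (b ^ 2 - 2 * a * c), mul_nonneg (neg_nonneg.mpr hcs) (sq_nonneg (b ^ 2 - 2 * a * c))]
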